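/- Over the three-letter alphabet Σ = {a, b, c}, the family C(∪,·) is not closed under Kleene star: the language L = L'·{c}, where L' = {w ∈ {a,b}⁺ : |w|_a = |w|_b}, belongs to C(∪,·), but its Kleene star L* = (L'·{c})* does not belong to C(∪,·). -/

import Mathlib

namespace Consensual

/-- The double alphabet `Σ̃ = Σ × Bool`: second component `true` means the letter is dotted. -/
abbrev DLetter (S : Type) := S × Bool

variable {S : Type} [DecidableEq S]

/-- Partial match of two letters of the double alphabet:
`a @ å = å @ a = a`, `å @ å = å`, undefined otherwise. -/
def matchLetter (x y : DLetter S) : Option (DLetter S) :=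
  if x.1 = y.1 ∧ (x.2 ∨ y.2) then some (x.1, x.2 && y.2) else none

/-- Letterwise partial match of two words over the double alphabet. -/
def matchWord : List (DLetter S) → List (DLetter S) → Option (List (DLetter S))
  | [], [] => some []
  | x :: xs, y :: ys => do
      let l ← matchLetter x y
      let rest ← matchWord xs ys
      pure (l :: rest)
  | _, _ => none

/-- Elementwise match of two languages over the double alphabet. -/
def matchLang (B C : Language (DLetter S)) : Language (DLetter S) :=
  { w | ∃ u ∈ B, ∃ v ∈ C, matchWord u v = some w }

/-- Iterated match `B^{i@}`. -/
def matchIter (B : Language (DLetter S)) : ℕ → Language (DLetter S)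
  | 0 => B
  | i + 1 => matchLang (matchIter B i) B

/-- Match closure `B^@ = ⋃ i, B^{i@}`. -/
def matchClosure (B : Language (DLetter S)) : Language (DLetter S) :=
  ⨆ i, matchIter B i

/-- The embedding of a word over `Σ` as an undotted word over `Σ̃`. -/
def undotWord (w : List S) : List (DLetter S) := w.map (fun a => (a, false))

/-- The consensual language `C(B) = B^@ ∩ Σ*` with base `B`, as a language over `Σ`. -/
def Cons (B : Language (DLetter S)) : Language S :=
  { w | undotWord w ∈ matchClosure B }

/-- A word consisting only of dotted letters. -/
def allDotted (w : List (DLetter S)) : Prop := ∀ l ∈ w, l.2 = true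

/-- `Σ̊*`, the language of all-dotted words (including ε). -/
def dottedStar : Language (DLetter S) := { w | allDotted w }

/-- `B ⊆ Σ̃* − Σ̊⁺`: no nonempty all-dotted word belongs to `B`. -/
def ProperBase (B : Language (DLetter S)) : Prop :=
  ∀ w ∈ B, w ≠ [] → ¬ allDotted w

/-- `B` is in decomposed form with scaffold `sc` and fill `fl`. -/
def IsDecomposed (B sc fl : Language (DLetter S)) : Prop :=
  ProperBase B ∧ B = sc ⊔ fl ∧ Disjoint sc fl ∧
    Cons fl = (⊥ : Language S) ∧ matchLang sc sc = (⊥ : Language (DLetter S))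

/-- Two decomposed bases `sc' ⊔ fl'` and `sc'' ⊔ fl''` are joinable. -/
def Joinable (sc' fl' sc'' fl'' : Language (DLetter S)) : Prop :=
  IsDecomposed ((sc' ⊔ fl') ⊔ (sc'' ⊔ fl'')) (sc' ⊔ sc'') (fl' ⊔ fl'') ∧
    matchLang sc' fl'' = (⊥ : Language (DLetter S)) ∧
    matchLang sc'' fl' = (⊥ : Language (DLetter S))

/-- `dot`: make every letter of a word dotted. -/
def dotWord (w : List (DLetter S)) : List (DLetter S) := w.map (fun l => (l.1, true))

/-- The dot-product `B' ⊙ B'' = (sc'·sc'') ⊔ fl' ⊔ fl''` of two decomposed bases. -/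
def dotProduct (sc' fl' sc'' fl'' : Language (DLetter S)) : Language (DLetter S) :=
  (sc' * sc'') ⊔ fl' ⊔ fl''

/-- Two decomposed bases `sc' ⊔ fl'` and `sc'' ⊔ fl''` are concatenable. -/
def Concatenable (sc' fl' sc'' fl'' : Language (DLetter S)) : Prop :=
  IsDecomposed (dotProduct sc' fl' sc'' fl'') (sc' * sc'') (fl' ⊔ fl'') ∧
  (∀ w' : List (DLetter S), w' ≠ [] → ∀ y' ∈ sc', ∀ y'' ∈ sc'',
    ((∃ x' ∈ fl', w' = x' ++ dotWord y'' ∧ (matchWord x' y').isSome) ↔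
      (w' ∈ fl' ∧ (matchWord w' (y' ++ y'')).isSome))) ∧
  (∀ w'' : List (DLetter S), w'' ≠ [] → ∀ y' ∈ sc', ∀ y'' ∈ sc'',
    ((∃ x'' ∈ fl'', w'' = dotWord y' ++ x'' ∧ (matchWord x'' y'').isSome) ↔
      (w'' ∈ fl'' ∧ (matchWord w'' (y' ++ y'')).isSome)))

/-! ### Slots, scaffolds and fills -/

/-- The word `å a^{r−1} å a^{m−r−1}`. -/
def slotWord (m r : ℕ) (a : S) : List (DLetter S) :=
  (a, true) :: (List.replicate (r - 1) (a, false) ++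
    (a, true) :: List.replicate (m - r - 1) (a, false))

/-- `R_m(a) = {å a^{r−1} å a^{m−r−1} : r ∈ R}`. -/
def Rm (m : ℕ) (R : Set ℕ) (a : S) : Language (DLetter S) :=
  { w | ∃ r ∈ R, w = slotWord m r a }

/-- Projection of a word over `Σ̃` on the two-letter alphabet `{a, å}`. -/
def projA (a : S) (x : List (DLetter S)) : List (DLetter S) :=
  x.filter (fun l => decide (l.1 = a))

/-- The scaffold language `sc_{R,m}`. -/
def scaffold (m : ℕ) (R : Set ℕ) : Language (DLetter S) :=
  { x | ∀ a : S, projA a x ∈ KStar.kstar (Rm m R a ⊔ {[(a, false)]}) }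

/-- `switch`: interchange `a` and `å` in every position. -/
def switchWord (w : List (DLetter S)) : List (DLetter S) := w.map (fun l => (l.1, !l.2))

/-- The fill language `fl_{R,m} = switch(sc_{R,m}) − Σ̊*`. -/
def fill (m : ℕ) (R : Set ℕ) : Language (DLetter S) :=
  { w | ∃ u ∈ scaffold (S := S) m R, w = switchWord u } \ dottedStar

/-- A language is shiftable if it absorbs all-dotted padding on both sides. -/
def Shiftable (F : Language (DLetter S)) : Prop :=
  F = dottedStar * F * dottedStar

/-- `R` is a set of slots of module `m`. -/
def SlotSet (m : ℕ) (R : Set ℕ) : Prop :=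
  4 ≤ m ∧ 2 ∣ m ∧ R.Nonempty ∧ ∀ r ∈ R, 1 ≤ r ∧ r ≤ m / 2 - 1

/-- The factor `α(i)…α(i+m−1)` of `α` (positions numbered from 1). -/
def factorAt (α : List (DLetter S)) (i m : ℕ) : List (DLetter S) :=
  (α.drop (i - 1)).take m

/-- `i` is a restarting point of `α ∈ π_ã(sc_{R,m})`. -/
def RestartScaffold (m : ℕ) (R : Set ℕ) (a : S) (α : List (DLetter S)) (i : ℕ) : Prop :=
  1 ≤ i ∧ i + m - 1 ≤ α.length ∧ factorAt α i m ∈ Rm m R a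

/-- `i` is a restarting point of `α ∈ π_ã(fl_{R̂,m})`. -/
def RestartFill (m : ℕ) (Rh : Set ℕ) (a : S) (α : List (DLetter S)) (i : ℕ) : Prop :=
  1 ≤ i ∧ i + m - 1 ≤ α.length ∧ (∃ u ∈ Rm m Rh a, factorAt α i m = switchWord u)

/-! ### Parikh images, COM-SLIP, and the family C(⊔,·) -/

/-- The Parikh image of a word. -/
def parikh (w : List S) : S → ℕ := fun a => w.count a

/-- A linear subset of `ℕ^Σ`. -/
def IsLinearSet (T : Set (S → ℕ)) : Prop :=
  ∃ (q : ℕ) (c : S → ℕ) (p : Fin q → S → ℕ),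
    T = { v | ∃ n : Fin q → ℕ, v = c + ∑ i, n i • p i }

/-- A semilinear subset of `ℕ^Σ`: a finite union of linear sets. -/
def IsSemilinearSet (T : Set (S → ℕ)) : Prop :=
  ∃ (t : ℕ) (f : Fin t → Set (S → ℕ)), (∀ i, IsLinearSet (f i)) ∧ T = ⋃ i, f i

/-- A commutative language: membership only depends on the Parikh image. -/
def CommutativeLang (L : Language S) : Prop :=
  ∀ w ∈ L, ∀ v : List S, parikh v = parikh w → v ∈ L

/-- A COM-SLIP language: commutative with semilinear Parikh image. -/
def IsComSlip (L : Language S) : Prop :=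
  CommutativeLang L ∧ IsSemilinearSet (parikh '' L)

/-- The family `C(⊔,·)`: the smallest family containing the COM-SLIP languages and
closed under binary union and concatenation. -/
inductive CUC {S : Type} [DecidableEq S] : Language S → Prop
  | base {L : Language S} : IsComSlip L → CUC L
  | union {L M : Language S} : CUC L → CUC M → CUC (L ⊔ M)
  | concat {L M : Language S} : CUC L → CUC M → CUC (L * M)

/-- Regular languages, via acceptance by a DFA with finitely many states. -/
def IsRegularLang {γ : Type} (B : Language γ) : Prop :=
  ∃ (σ : Type) (_ : Fintype σ) (M : DFA γ σ), M.accepts = B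

/-! ### Shuffle, appending, and the base `D` for a COM-LIP language -/

/-- `IsShuffle x y z`: `z` is an interleaving of `x` and `y`. -/
inductive IsShuffle {γ : Type} : List γ → List γ → List γ → Prop
  | nil : IsShuffle [] [] []
  | left {x : γ} {xs ys zs} : IsShuffle xs ys zs → IsShuffle (x :: xs) ys (x :: zs)
  | right {y : γ} {xs ys zs} : IsShuffle xs ys zs → IsShuffle xs (y :: ys) (y :: zs)

/-- The shuffle of two languages. -/
def shuffleLang {γ : Type} (L M : Language γ) : Language γ :=
  { z | ∃ x ∈ L, ∃ y ∈ M, IsShuffle x y z }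

/-- Split `w` as `u·v` where `v` is the longest suffix of `w` with no occurrence
of `a` or `å`; returns `(u, v)`. -/
def splitSuffix (a : S) (w : List (DLetter S)) : List (DLetter S) × List (DLetter S) :=
  ((w.reverse.dropWhile (fun l => decide (l.1 ≠ a))).reverse,
   (w.reverse.takeWhile (fun l => decide (l.1 ≠ a))).reverse)

/-- The append operation `B ◁ A` for `A ⊆ a⁺`. -/
def appendA (a : S) (B : Language (DLetter S)) (A : Language S) : Language (DLetter S) :=
  { w' | ∃ w ∈ B, ∃ s ∈ A, ∃ z, IsShuffle (splitSuffix a w).2 (undotWord s) z ∧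
      w' = (splitSuffix a w).1 ++ z }

/-- Projection of a language over `Σ` on the single letter `a`. -/
def projLetter (a : S) (F : Language S) : Language S :=
  { y | ∃ w ∈ F, y = w.filter (fun l => decide (l = a)) }

/-- Letter-by-letter appending `B ◁ F` (over the alphabet `Fin k`,
processing the letters `a₁, …, a_k` in order). -/
def lblAppend {k : ℕ} (B : Language (DLetter (Fin k))) (F : Language (Fin k)) :
    Language (DLetter (Fin k)) :=
  (List.finRange k).foldl (fun Bc a => appendA a Bc (projLetter a F)) B

/-- Projection of a word over `Σ̃` on the undotted letters. -/
def projSigma (x : List (DLetter S)) : List S :=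
  (x.filter (fun l => !l.2)).map Prod.fst

/-- The fill part `X` of the decomposed base for a COM-LIP language with periods `p`. -/
def Xlang {k q : ℕ} (m r : ℕ) (p : Fin q → Fin k → ℕ) : Language (DLetter (Fin k)) :=
  { x | x ∈ fill m {r} ∧ ∃ i : Fin q, parikh (projSigma x) = p i }

/-- `Y = (R_m(a₁))* ⧢ … ⧢ (R_m(a_k))*`. -/
def Ylang (k : ℕ) (m : ℕ) (R : Set ℕ) : Language (DLetter (Fin k)) :=
  (List.finRange k).foldl
    (fun acc a => shuffleLang acc (KStar.kstar (Rm m R a))) (1 : Language (DLetter (Fin k)))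

/-- The finite commutative language `W` with Parikh image
`{c + h₁p⁽¹⁾ + … + h_qp⁽q⁾ : 0 ≤ hⱼ < m/2}`. -/
def Wlang {k q : ℕ} (m : ℕ) (c : Fin k → ℕ) (p : Fin q → Fin k → ℕ) : Language (Fin k) :=
  { w | ∃ h : Fin q → ℕ, (∀ i, h i < m / 2) ∧ parikh w = c + ∑ i, h i • p i }

/-- The decomposed base `D = X ⊔ (Y ◁ W)` for a COM-LIP language. -/
def Dlang {k q : ℕ} (m r : ℕ) (c : Fin k → ℕ) (p : Fin q → Fin k → ℕ) :
    Language (DLetter (Fin k)) :=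
  Xlang m r p ⊔ lblAppend (Ylang k m {r}) (Wlang m c p)

/-- `matchListAll [x₁, …, x_n] = some u` iff `u = x₁ @ x₂ @ … @ x_n`. -/
def matchListAll : List (List (DLetter S)) → Option (List (DLetter S))
  | [] => none
  | [x] => some x
  | x :: xs => (matchListAll xs).bind (fun u => matchWord x u)


/-- `L' = {w ∈ {a,b}⁺ : |w|_a = |w|_b}` over the alphabet `{a, b, c} = Fin 3`
(`a = 0`, `b = 1`, `c = 2`). -/
def LprimeAB : Language (Fin 3) :=
  { w | w ≠ [] ∧ (∀ l ∈ w, l = 0 ∨ l = 1) ∧ w.count 0 = w.count 1 }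

/-- `L = L'·{c}`. -/
def LprimeC : Language (Fin 3) := LprimeAB * {[2]}

/-- Over `{a, b, c}`, the family `C(∪,·)` is not closed under Kleene
star: `L = L'·{c}` is in `C(∪,·)` but `L*` is not. -/
/- ### auxiliary -/

lemma length_eq_counts (w : List (Fin 3)) :
    w.length = w.count 0 + w.count 1 + w.count 2 := by
  induction w with
  | nil => simp
  | cons a t ih => fin_cases a <;> simp [List.count_cons, ih] <;> omega

lemma comslip_LprimeAB : IsComSlip LprimeAB := by
  constructor
  · rintro w ⟨hne, hab, hcnt⟩ v hp
    have h0 : v.count 0 = w.count 0 := congrFun hp 0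
    have h1 : v.count 1 = w.count 1 := congrFun hp 1
    have h2 : v.count 2 = w.count 2 := congrFun hp 2
    have hw2 : w.count 2 = 0 := by
      rw [List.count_eq_zero]
      intro h; rcases hab 2 h with h' | h' <;> exact absurd h' (by decide)
    refine ⟨?_, ?_, by omega⟩
    · intro h
      have hlw := length_eq_counts w
      have hwne : w.length ≠ 0 := by simpa using hne
      have hvl : v.length = 0 := by simp [h]
      have hlv := length_eq_counts v
      omega
    · intro l hl
      have : l ≠ 2 := by
        intro h; subst h
        have := List.count_pos_iff.mpr hl
        omega
      revert this; clear hl; revert l; decide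
  · refine ⟨1, fun _ => { v | ∃ n : Fin 1 → ℕ,
      v = (fun a : Fin 3 => if a = 2 then 0 else 1) + ∑ i, n i • (fun a : Fin 3 => if a = 2 then 0 else 1) }, fun i => ⟨1, _, _, rfl⟩, ?_⟩
    ext v
    simp only [Set.mem_image, Set.mem_iUnion, Set.mem_setOf_eq]
    constructor
    · rintro ⟨w, ⟨hne, hab, hcnt⟩, rfl⟩
      have hw2 : w.count 2 = 0 := by
        rw [List.count_eq_zero]
        intro h; rcases hab 2 h with h' | h' <;> exact absurd h' (by decide)
      have hpos : 1 ≤ w.count 0 := by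
        have hlw := length_eq_counts w
        have : w.length ≠ 0 := by simpa using hne
        omega
      refine ⟨0, fun _ => w.count 0 - 1, ?_⟩
      funext a
      simp only [Fin.sum_univ_one, Pi.add_apply, Pi.smul_apply, smul_eq_mul, parikh]
      fin_cases a <;> simp <;> omega
    · rintro ⟨_, n, rfl⟩
      refine ⟨List.replicate (n 0 + 1) 0 ++ List.replicate (n 0 + 1) 1, ⟨?_, ?_, ?_⟩, ?_⟩
      · simp
      · intro l hl
        rcases List.mem_append.1 hl with h | h
        · left; exact (List.eq_of_mem_replicate h)
        · right; exact (List.eq_of_mem_replicate h)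
      · simp [List.count_replicate]
      · funext a
        simp only [Fin.sum_univ_one, Pi.add_apply, Pi.smul_apply, smul_eq_mul, parikh]
        fin_cases a <;> simp [List.count_replicate] <;> omega

lemma comslip_singleton_c : IsComSlip ({[2]} : Language (Fin 3)) := by
  constructor
  · rintro w hw v hp
    have hw' : w = [2] := hw
    subst hw'
    have h0 : v.count 0 = 0 := by have := congrFun hp 0; simpa [parikh] using this
    have h1 : v.count 1 = 0 := by have := congrFun hp 1; simpa [parikh] using this
    have h2 : v.count 2 = 1 := by have := congrFun hp 2; simpa [parikh] using this
    have hl : v.length = 1 := by have := length_eq_counts v; omega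
    obtain ⟨a, rfl⟩ := List.length_eq_one_iff.1 hl
    have : a = 2 := by
      have : a ≠ 0 := by intro h; subst h; simp at h0
      have h1' : a ≠ 1 := by intro h; subst h; simp at h1
      revert this h1'; revert a; decide
    simp [this]
    rfl
  · refine ⟨1, fun _ => { v | ∃ n : Fin 0 → ℕ, v = parikh [(2 : Fin 3)] + ∑ i, n i • Fin.elim0 i }, fun i => ⟨0, _, _, rfl⟩, ?_⟩
    ext v
    simp only [Set.mem_image, Set.mem_iUnion, Set.mem_setOf_eq]
    constructor
    · rintro ⟨w, hw, rfl⟩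
      have hw' : w = [2] := hw
      subst hw'
      exact ⟨0, Fin.elim0, by simp⟩
    · rintro ⟨_, n, rfl⟩
      exact ⟨[2], rfl, by simp⟩

/- ### the bounded-decomposition invariant -/

def SortedW (s : List (Fin 3)) : Prop :=
  ∃ p q r, s = List.replicate p 0 ++ List.replicate q 1 ++ List.replicate r 2

def PBound (L : Language (Fin 3)) : Prop :=
  ∃ n : ℕ, ∀ w ∈ L, ∃ v ∈ L, parikh v = parikh w ∧
    ∃ ss : List (List (Fin 3)), v = ss.flatten ∧ ss.length ≤ n ∧ ∀ s ∈ ss, SortedW s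

lemma pbound_of_cuc {L : Language (Fin 3)} (h : CUC L) : PBound L := by
  induction h with
  | @base L hL =>
    refine ⟨1, fun w hw => ?_⟩
    set v : List (Fin 3) := List.replicate (w.count 0) 0 ++ List.replicate (w.count 1) 1 ++
      List.replicate (w.count 2) 2 with hv
    have hp : parikh v = parikh w := by
      funext a; fin_cases a <;> simp [parikh, hv, List.count_replicate]
    exact ⟨v, hL.1 w hw v hp, hp, [v], by simp, by simp, by
      rintro s hs; simp at hs; subst hs; exact ⟨_, _, _, rfl⟩⟩
  | union h1 h2 ih1 ih2 =>
    obtain ⟨n1, H1⟩ := ih1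
    obtain ⟨n2, H2⟩ := ih2
    refine ⟨max n1 n2, fun w hw => ?_⟩
    rcases hw with hw | hw
    · obtain ⟨v, hv, hp, ss, h1', h2', h3'⟩ := H1 w hw
      exact ⟨v, Or.inl hv, hp, ss, h1', le_trans h2' (le_max_left _ _), h3'⟩
    · obtain ⟨v, hv, hp, ss, h1', h2', h3'⟩ := H2 w hw
      exact ⟨v, Or.inr hv, hp, ss, h1', le_trans h2' (le_max_right _ _), h3'⟩
  | concat h1 h2 ih1 ih2 =>
    obtain ⟨n1, H1⟩ := ih1
    obtain ⟨n2, H2⟩ := ih2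
    refine ⟨n1 + n2, fun w hw => ?_⟩
    obtain ⟨w1, hw1, w2, hw2, rfl⟩ := Language.mem_mul.1 hw
    obtain ⟨v1, hv1, hp1, ss1, e1, l1, s1⟩ := H1 w1 hw1
    obtain ⟨v2, hv2, hp2, ss2, e2, l2, s2⟩ := H2 w2 hw2
    refine ⟨v1 ++ v2, Language.append_mem_mul hv1 hv2, ?_, ss1 ++ ss2, ?_, ?_, ?_⟩
    · funext a
      have := congrFun hp1 a; have := congrFun hp2 a
      simp_all [parikh, List.count_append]
    · simp [e1, e2]
    · simpa using Nat.add_le_add l1 l2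
    · intro s hs; rcases List.mem_append.1 hs with h | h
      exacts [s1 s h, s2 s h]

/- ### no adjacent c's in L* -/

def RR (x y : Fin 3) : Prop := x ≠ 2 ∨ y ≠ 2

lemma chain'_of_all_ne {l : List (Fin 3)} (h : ∀ x ∈ l, x ≠ 2) : List.Chain' RR l := by
  induction l with
  | nil => simp [List.Chain']
  | cons a t ih =>
    rw [List.Chain', List.isChain_cons]
    exact ⟨fun y _ => Or.inl (h a (by simp)), ih fun x hx => h x (by simp [hx])⟩

lemma block_struct {y : List (Fin 3)} (hy : y ∈ LprimeC) :
    List.Chain' RR y ∧ ∀ h ∈ y.head?, h ≠ 2 := by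
  obtain ⟨w', ⟨hne, hab, -⟩, b, hb, rfl⟩ := Language.mem_mul.1 hy
  have hb' : b = [2] := hb
  subst hb'
  have hne2 : ∀ x ∈ w', x ≠ (2 : Fin 3) := by
    intro x hx; rcases hab x hx with h | h <;> (subst h; decide)
  constructor
  · rw [List.Chain', List.isChain_append]
    refine ⟨chain'_of_all_ne hne2, by simp, ?_⟩
    intro x hx z hz
    exact Or.inl (hne2 x (List.mem_of_mem_getLast? hx))
  · obtain ⟨a, t, rfl⟩ := List.exists_cons_of_ne_nil hne
    intro h hh
    simp at hh; subst hh
    exact hne2 _ (by simp)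

lemma chain_of_flatten {Ls : List (List (Fin 3))} (h : ∀ y ∈ Ls, y ∈ LprimeC) :
    List.Chain' RR Ls.flatten ∧ ∀ x ∈ Ls.flatten.head?, x ≠ 2 := by
  induction Ls with
  | nil => simp [List.Chain']
  | cons y rest ih =>
    obtain ⟨hc, hh⟩ := block_struct (h y (by simp))
    obtain ⟨hc', hh'⟩ := ih fun z hz => h z (by simp [hz])
    rw [List.flatten_cons]
    constructor
    · rw [List.Chain', List.isChain_append]
      exact ⟨hc, hc', fun x _ z hz => Or.inr (hh' z hz)⟩
    · cases y with
      | nil => intro x hx; exact hh' x (by simpa using hx)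
      | cons a t =>
        intro x hx
        simp at hx
        subst hx
        exact hh _ (by simp)

lemma chain_of_mem_kstar {v : List (Fin 3)} (hv : v ∈ KStar.kstar LprimeC) :
    List.Chain' RR v := by
  obtain ⟨Ls, rfl, hLs⟩ := Language.mem_kstar.1 hv
  exact (chain_of_flatten hLs).1

/- ### putting it together -/

theorem cuc_not_closed_under_star :
    CUC LprimeC ∧ ¬ CUC (KStar.kstar LprimeC) := by
  constructor
  · exact CUC.concat (CUC.base comslip_LprimeAB) (CUC.base comslip_singleton_c)
  · intro h
    obtain ⟨n, hP⟩ := pbound_of_cuc h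
    set w : List (Fin 3) := (List.replicate (n + 1) ([0, 1, 2] : List (Fin 3))).flatten with hwdef
    have hw : w ∈ KStar.kstar LprimeC := by
      apply Language.join_mem_kstar
      intro y hy
      have : y = [0, 1, 2] := List.eq_of_mem_replicate hy
      subst this
      exact Language.append_mem_mul (l := LprimeAB) (m := {[2]})
        (a := [0, 1]) (b := [2]) ⟨by simp, by decide, by decide⟩ rfl
    obtain ⟨v, hv, hp, ss, hjoin, hlen, hsort⟩ := hP w hw
    have hcw : w.count 2 = n + 1 := by
      simp [hwdef, List.count_flatten, List.map_replicate, List.sum_replicate]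
    have hcv : v.count 2 = n + 1 := by
      have := congrFun hp 2; simpa [parikh, hcw] using this
    have hex : ∃ s ∈ ss, 2 ≤ s.count 2 := by
      by_contra hno
      push_neg at hno
      have hble : (ss.map (List.count 2)).sum ≤ ss.length * 1 := by
        have := List.sum_le_card_nsmul (ss.map (List.count 2)) 1 (by
          intro x hx
          obtain ⟨s', hs', rfl⟩ := List.mem_map.1 hx
          have := hno s' hs'
          omega)
        simpa [smul_eq_mul] using this
      rw [hjoin] at hcv
      rw [List.count_flatten] at hcv
      omega
    obtain ⟨s, hs, h2⟩ := hex
    obtain ⟨p, q, r, rfl⟩ := hsort s hs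
    have hr : 2 ≤ r := by
      simp [List.count_replicate] at h2
      omega
    have hinf : [(2 : Fin 3), 2] <:+: v := by
      have h1 : [(2 : Fin 3), 2] <:+:
          List.replicate p 0 ++ List.replicate q 1 ++ List.replicate r 2 := by
        obtain ⟨r', rfl⟩ : ∃ r', r = 2 + r' := ⟨r - 2, by omega⟩
        refine ⟨List.replicate p 0 ++ List.replicate q 1, List.replicate r' 2, ?_⟩
        simp [List.replicate_add, List.replicate_succ]
      exact h1.trans (hjoin ▸ List.infix_of_mem_flatten hs)
    have hch := chain_of_mem_kstar hv
    have := hch.infix hinf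
    rw [List.isChain_cons_cons] at this
    rcases this.1 with h' | h' <;> exact h' rfl


end Consensual
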